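/- Let H_ε = −εΔ + V on ℓ²(Θ) for a finite set Θ ⊂ ℤ^d, and suppose |V(x) − V(y)| ≥ η for all x ≠ y in Θ. If ε < η/(4d), then H_{ε,Θ} has an eigensystem {(ψ_x, λ_x)}_{x∈Θ} with |λ_x − λ_y| ≥ η − 4dε > 0 for all x ≠ y, and |ψ_y(x)| ≤ (2dε/(η − 2dε))^{|x−y|_1} for all x, y ∈ Θ. -/

import Mathlib

/-- ℓ¹ distance on `ℤ^d`. -/
def dist1 {d : ℕ} (x y : Fin d → ℤ) : ℕ := ∑ i, (x i - y i).natAbs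

/-- The restriction `H_{ε,Θ} = χ_Θ (-εΔ + V) χ_Θ` of the discrete Schrödinger operator to
`Θ ⊂ ℤ^d`, acting on functions supported in `Θ`. -/
noncomputable def Hop {d : ℕ} (ε : ℝ) (V : (Fin d → ℤ) → ℝ) (Θ : Finset (Fin d → ℤ))
    (ψ : (Fin d → ℤ) → ℂ) : (Fin d → ℤ) → ℂ := fun x =>
  if x ∈ Θ then
    -(ε : ℂ) * (∑ y ∈ Θ.filter fun y => dist1 x y = 1, ψ y) + (V x : ℂ) * ψ x
  else 0

lemma dist1_comm {d : ℕ} (x y : Fin d → ℤ) : dist1 x y = dist1 y x := by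
  unfold dist1; congr 1; ext i; rw [← Int.natAbs_neg]; ring_nf

lemma dist1_eq_zero {d : ℕ} {x y : Fin d → ℤ} (h : dist1 x y = 0) : x = y := by
  funext i
  have := Finset.sum_eq_zero_iff.mp h i (Finset.mem_univ i)
  have := Int.natAbs_eq_zero.mp this
  linarith [this]

lemma dist1_triangle {d : ℕ} (x y z : Fin d → ℤ) : dist1 x z ≤ dist1 x y + dist1 y z := by
  unfold dist1
  rw [← Finset.sum_add_distrib]
  apply Finset.sum_le_sum
  intro i _
  have : x i - z i = (x i - y i) + (y i - z i) := by ring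
  rw [this]
  exact Int.natAbs_add_le _ _

lemma card_neighbors {d : ℕ} (Θ : Finset (Fin d → ℤ)) (x : Fin d → ℤ) :
    (Θ.filter fun y => dist1 x y = 1).card ≤ 2 * d := by
  classical
  have hsub : (Θ.filter fun y => dist1 x y = 1) ⊆
      Finset.image (fun p : Fin d × Bool =>
        Function.update x p.1 (x p.1 + if p.2 then 1 else -1)) Finset.univ := by
    intro z hz
    rw [Finset.mem_filter] at hz
    obtain ⟨-, hz⟩ := hz
    -- dist1 x z = 1 : exactly one coordinate differs by 1
    have hex : ∃ i, (x i - z i).natAbs ≠ 0 := by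
      by_contra hc
      push_neg at hc
      have : dist1 x z = 0 := Finset.sum_eq_zero fun i _ => hc i
      omega
    obtain ⟨i, hi⟩ := hex
    have hone : (x i - z i).natAbs = 1 := by
      have h1 : (x i - z i).natAbs ≤ ∑ j, (x j - z j).natAbs :=
        Finset.single_le_sum (f := fun j => (x j - z j).natAbs)
          (fun j _ => Nat.zero_le _) (Finset.mem_univ i)
      unfold dist1 at hz; omega
    have hrest : ∀ j, j ≠ i → (x j - z j).natAbs = 0 := by
      intro j hj
      have hsum : (x i - z i).natAbs + ∑ k ∈ Finset.univ.erase i, (x k - z k).natAbs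
          = ∑ k, (x k - z k).natAbs :=
        Finset.add_sum_erase Finset.univ (fun j => (x j - z j).natAbs) (Finset.mem_univ i)
      unfold dist1 at hz
      have hz0 : ∑ k ∈ Finset.univ.erase i, (x k - z k).natAbs = 0 := by omega
      exact Finset.sum_eq_zero_iff.mp hz0 j (Finset.mem_erase.mpr ⟨hj, Finset.mem_univ j⟩)
    rw [Finset.mem_image]
    rcases Int.natAbs_eq_iff.mp hone with h | h
    · refine ⟨(i, false), Finset.mem_univ _, ?_⟩
      funext j
      by_cases hj : j = i
      · subst hj; simp [Function.update_self]; omega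
      · rw [Function.update_of_ne hj]
        have := hrest j hj
        have := Int.natAbs_eq_zero.mp this
        omega
    · refine ⟨(i, true), Finset.mem_univ _, ?_⟩
      funext j
      by_cases hj : j = i
      · subst hj; simp [Function.update_self]; omega
      · rw [Function.update_of_ne hj]
        have := hrest j hj
        have := Int.natAbs_eq_zero.mp this
        omega
  calc (Θ.filter fun y => dist1 x y = 1).card ≤ _ := Finset.card_le_card hsub
    _ ≤ (Finset.univ : Finset (Fin d × Bool)).card := Finset.card_image_le
    _ = 2 * d := by simp [Finset.card_univ, mul_comm]

section Mat
open Matrix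
variable {d : ℕ} (ε : ℝ) (V : (Fin d → ℤ) → ℝ) (Θ : Finset (Fin d → ℤ))

/-- matrix of the restricted operator -/
noncomputable def Amat : Matrix {x // x ∈ Θ} {x // x ∈ Θ} ℂ := fun x z =>
  (if dist1 x.1 z.1 = 1 then (-ε : ℂ) else 0) + (if x = z then (V x.1 : ℂ) else 0)

/-- extension by zero -/
noncomputable def extΘ (v : {x // x ∈ Θ} → ℂ) : (Fin d → ℤ) → ℂ := fun y =>
  if h : y ∈ Θ then v ⟨y, h⟩ else 0

lemma extΘ_coe (v : {x // x ∈ Θ} → ℂ) (z : {x // x ∈ Θ}) : extΘ Θ v z.1 = v z := by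
  simp [extΘ]

lemma Amat_mulVec (v : {x // x ∈ Θ} → ℂ) (w : {x // x ∈ Θ}) :
    (Amat ε V Θ *ᵥ v) w =
      -(ε : ℂ) * (∑ y ∈ Θ.filter fun y => dist1 w.1 y = 1, extΘ Θ v y)
        + (V w.1 : ℂ) * v w := by
  classical
  have : (Amat ε V Θ *ᵥ v) w = ∑ z : {x // x ∈ Θ},
      ((if dist1 w.1 z.1 = 1 then (-ε : ℂ) else 0) * v z
        + (if w = z then (V w.1 : ℂ) else 0) * v z) := by
    simp [Amat, Matrix.mulVec, dotProduct, add_mul]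
  rw [this, Finset.sum_add_distrib]
  congr 1
  · have h1 : ∀ z : {x // x ∈ Θ},
        (if dist1 w.1 z.1 = 1 then (-ε : ℂ) else 0) * v z
          = if dist1 w.1 z.1 = 1 then (-(ε:ℂ)) * extΘ Θ v z.1 else 0 := by
      intro z
      by_cases h : dist1 w.1 z.1 = 1 <;> simp [h, extΘ_coe]
    rw [Finset.sum_congr rfl fun z _ => h1 z]
    rw [Finset.univ_eq_attach]
    rw [Finset.sum_attach Θ (fun y => if dist1 w.1 y = 1 then (-(ε:ℂ)) * extΘ Θ v y else 0)]
    rw [Finset.sum_filter, Finset.mul_sum]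
    exact Finset.sum_congr rfl fun y _ => by by_cases h : dist1 w.1 y = 1 <;> simp [h]
  · rw [Finset.sum_eq_single w]
    · simp
    · intro z _ hz
      simp [Ne.symm hz]
    · simp

lemma Amat_isHermitian : (Amat ε V Θ).IsHermitian := by
  ext x z
  simp only [Amat, Matrix.conjTranspose_apply, star_add]
  have hc : dist1 z.1 x.1 = dist1 x.1 z.1 := dist1_comm z.1 x.1
  by_cases h1 : dist1 x.1 z.1 = 1 <;> by_cases h2 : x = z <;>
    simp_all [eq_comm, ← Complex.ofReal_neg]

lemma step_bound {ε : ℝ} (hε : 0 ≤ ε)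
    (u : {x // x ∈ Θ} → ℂ) (lam : ℝ) (w : {x // x ∈ Θ})
    (heq : (Amat ε V Θ *ᵥ u) w = (lam : ℂ) * u w)
    (C : ℝ) (hC0 : 0 ≤ C)
    (hC : ∀ y ∈ Θ.filter fun y => dist1 w.1 y = 1, ‖extΘ Θ u y‖ ≤ C) :
    |lam - V w.1| * ‖u w‖ ≤ 2 * d * ε * C := by
  classical
  rw [Amat_mulVec] at heq
  set S := ∑ y ∈ Θ.filter (fun y => dist1 w.1 y = 1), extΘ Θ u y with hS
  have key : ((lam : ℂ) - (V w.1 : ℂ)) * u w = -(ε : ℂ) * S := by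
    linear_combination -heq
  have h1 : |lam - V w.1| * ‖u w‖ = ε * ‖S‖ := by
    have h2 := congrArg (‖·‖) key
    rw [norm_mul, norm_mul, ← Complex.ofReal_sub, Complex.norm_real, Real.norm_eq_abs] at h2
    rw [show (-(ε : ℂ)) = ((-ε : ℝ) : ℂ) by push_cast; ring, Complex.norm_real, Real.norm_eq_abs,
      abs_neg, abs_of_nonneg hε] at h2
    exact h2
  have h3 : ‖S‖ ≤ 2 * d * C := by
    calc ‖S‖ ≤ ∑ y ∈ Θ.filter (fun y => dist1 w.1 y = 1),
          ‖extΘ Θ u y‖ := norm_sum_le _ _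
      _ ≤ (Θ.filter fun y => dist1 w.1 y = 1).card • C :=
          Finset.sum_le_card_nsmul _ _ _ hC
      _ = ((Θ.filter fun y => dist1 w.1 y = 1).card : ℝ) * C := nsmul_eq_mul _ _
      _ ≤ 2 * d * C := by
          apply mul_le_mul_of_nonneg_right _ hC0
          exact_mod_cast card_neighbors Θ w.1
  rw [h1]
  calc ε * ‖S‖ ≤ ε * (2 * d * C) := mul_le_mul_of_nonneg_left h3 hε
    _ = 2 * d * ε * C := by ring

lemma localization {ε : ℝ} (hε : 0 ≤ ε)
    (u : {x // x ∈ Θ} → ℂ) (hu : u ≠ 0) (lam : ℝ)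
    (heq : ∀ w, (Amat ε V Θ *ᵥ u) w = (lam : ℂ) * u w) :
    ∃ x : {x // x ∈ Θ}, |lam - V x.1| ≤ 2 * d * ε := by
  classical
  have hne : (Finset.univ : Finset {x // x ∈ Θ}).Nonempty := by
    by_contra hc
    apply hu
    funext z
    exact absurd (Finset.mem_univ z) (fun h => hc ⟨z, h⟩)
  obtain ⟨w₀, -, hmax⟩ := Finset.exists_max_image Finset.univ
    (fun z => ‖u z‖) hne
  have hw0 : u w₀ ≠ 0 := by
    intro h0
    apply hu
    funext z
    have := hmax z (Finset.mem_univ z)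
    simp only [h0, norm_zero] at this
    exact norm_eq_zero.mp (le_antisymm this (norm_nonneg _))
  have hb := step_bound V Θ hε u lam w₀ (heq w₀) (‖u w₀‖) (norm_nonneg _) ?_
  · refine ⟨w₀, ?_⟩
    have ha : 0 < ‖u w₀‖ := norm_pos_iff.mpr hw0
    exact le_of_mul_le_mul_right hb ha
  · intro y hy
    have hyΘ : y ∈ Θ := (Finset.mem_filter.mp hy).1
    rw [show y = (⟨y, hyΘ⟩ : {x // x ∈ Θ}).1 from rfl, extΘ_coe]
    exact hmax _ (Finset.mem_univ _)

lemma exists_eigenvalue_near (hd : 0 < d) {ε : ℝ} (hε : 0 ≤ ε)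
    (hA : (Amat ε V Θ).IsHermitian) (x : {x // x ∈ Θ}) :
    ∃ i, |hA.eigenvalues i - V x.1| ≤ 2 * d * ε := by
  classical
  by_contra hc
  push_neg at hc
  set b := hA.eigenvectorBasis with hb
  set μ := hA.eigenvalues with hμ
  set δ : EuclideanSpace ℂ {x // x ∈ Θ} := EuclideanSpace.single x 1 with hδ
  set T := Matrix.toEuclideanLin (Amat ε V Θ) with hT
  set w : EuclideanSpace ℂ {x // x ∈ Θ} := T δ - (V x.1 : ℂ) • δ with hw
  have hδz : ∀ z : {x // x ∈ Θ}, δ z = if z = x then 1 else 0 := by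
    intro z; simp [hδ, EuclideanSpace.single_apply]
  -- pointwise formula for w
  have hwz : ∀ z : {x // x ∈ Θ}, w z = if dist1 z.1 x.1 = 1 then (-ε : ℂ) else 0 := by
    intro z
    have h0 : w z = (Amat ε V Θ *ᵥ (δ : {x // x ∈ Θ} → ℂ)) z - (V x.1 : ℂ) * δ z := rfl
    rw [h0, Amat_mulVec]
    have h3 : ∀ y ∈ Θ.filter fun y => dist1 z.1 y = 1,
        extΘ Θ (δ : {x // x ∈ Θ} → ℂ) y = if y = x.1 then 1 else 0 := by
      intro y hy
      have hyΘ : y ∈ Θ := (Finset.mem_filter.mp hy).1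
      rw [show y = ((⟨y, hyΘ⟩ : {x // x ∈ Θ}) : Fin d → ℤ) from rfl, extΘ_coe, hδz]
      simp [Subtype.ext_iff]
    rw [Finset.sum_congr rfl h3, Finset.sum_ite_eq' _ x.1 (fun _ => (1 : ℂ))]
    by_cases hzx : z = x
    · subst hzx
      have : dist1 z.1 z.1 = 0 := by simp [dist1]
      simp [this, hδz]
    · have hd1 : (x.1 ∈ Θ.filter fun y => dist1 z.1 y = 1) ↔ dist1 z.1 x.1 = 1 := by
        simp [Finset.mem_filter, x.2]
      by_cases hne : dist1 z.1 x.1 = 1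
      · simp [hd1.mpr hne, hne, hδz, hzx]
      · have : x.1 ∉ Θ.filter fun y => dist1 z.1 y = 1 := fun h =>
          hne ((Finset.mem_filter.mp h).2)
        simp [this, hne, hδz, hzx]
  -- first norm computation
  have hnorm1 : ‖w‖ ^ 2 ≤ 2 * d * ε ^ 2 := by
    rw [PiLp.norm_sq_eq_of_L2]
    have heach : ∀ z : {x // x ∈ Θ},
        ‖w z‖ ^ 2 = if dist1 z.1 x.1 = 1 then ε ^ 2 else 0 := by
      intro z
      rw [hwz]
      split
      · rw [show (-ε : ℂ) = ((-ε : ℝ) : ℂ) by push_cast; ring, Complex.norm_real,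
          Real.norm_eq_abs, sq_abs]
        ring
      · simp
    rw [Finset.sum_congr rfl fun z _ => heach z]
    rw [Finset.univ_eq_attach,
      Finset.sum_attach Θ (fun y => if dist1 y x.1 = 1 then ε ^ 2 else 0),
      ← Finset.sum_filter]
    have hfc : Θ.filter (fun y => dist1 y x.1 = 1) = Θ.filter (fun y => dist1 x.1 y = 1) := by
      apply Finset.filter_congr
      intro y _
      rw [dist1_comm]
    rw [hfc, Finset.sum_const, nsmul_eq_mul]
    have hcard : ((Θ.filter fun y => dist1 x.1 y = 1).card : ℝ) ≤ 2 * d := by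
      exact_mod_cast card_neighbors Θ x.1
    nlinarith [sq_nonneg ε]
  -- coefficients
  have hrepr : ∀ i, b.repr w i = ((μ i : ℂ) - (V x.1 : ℂ)) * b.repr δ i := by
    intro i
    have hsymm := Matrix.isHermitian_iff_isSymmetric.mp hA
    have hTb : T (b i) = (μ i : ℂ) • b i := by
      ext z
      have h1 : T (b i) z = (Amat ε V Θ *ᵥ ⇑(b i)) z := rfl
      rw [h1, hA.mulVec_eigenvectorBasis i]
      simp [Pi.smul_apply, Complex.real_smul]
      rfl
    rw [OrthonormalBasis.repr_apply_apply, OrthonormalBasis.repr_apply_apply, hw,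
      inner_sub_right, inner_smul_right, ← hsymm (b i) δ, hTb, inner_smul_left,
      Complex.conj_ofReal]
    ring
  have hδ1 : ∑ i, ‖b.repr δ i‖ ^ 2 = 1 := by
    rw [← PiLp.norm_sq_eq_of_L2, b.repr.norm_map, hδ, EuclideanSpace.norm_single]
    norm_num
  obtain ⟨i₀, hi₀⟩ : ∃ i, b.repr δ i ≠ 0 := by
    by_contra hall
    push_neg at hall
    rw [Finset.sum_eq_zero (fun i _ => by rw [hall i]; simp)] at hδ1
    norm_num at hδ1
  have hlt : (2 * d * ε) ^ 2 < ‖w‖ ^ 2 := by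
    rw [← b.repr.norm_map w, PiLp.norm_sq_eq_of_L2]
    have heach : ∀ i, (2 * d * ε) ^ 2 * ‖b.repr δ i‖ ^ 2 ≤ ‖b.repr w i‖ ^ 2 := by
      intro i
      rw [hrepr, norm_mul]
      have h1 : ‖((μ i : ℂ) - (V x.1 : ℂ))‖ = |μ i - V x.1| := by
        rw [← Complex.ofReal_sub, Complex.norm_real, Real.norm_eq_abs]
      rw [h1]
      have h2 : 2 * d * ε ≤ |μ i - V x.1| := le_of_lt (hc i)
      have h3 : (0:ℝ) ≤ 2 * d * ε := by positivity
      have h5 : (2 * d * ε) ^ 2 ≤ |μ i - V x.1| ^ 2 := by nlinarith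
      calc (2 * d * ε) ^ 2 * ‖b.repr δ i‖ ^ 2
          ≤ |μ i - V x.1| ^ 2 * ‖b.repr δ i‖ ^ 2 :=
            mul_le_mul_of_nonneg_right h5 (sq_nonneg _)
        _ = (|μ i - V x.1| * ‖b.repr δ i‖) ^ 2 := by ring
    have hstrict : (2 * d * ε) ^ 2 * ‖b.repr δ i₀‖ ^ 2 < ‖b.repr w i₀‖ ^ 2 := by
      rw [hrepr, norm_mul]
      have h1 : ‖((μ i₀ : ℂ) - (V x.1 : ℂ))‖ = |μ i₀ - V x.1| := by
        rw [← Complex.ofReal_sub, Complex.norm_real, Real.norm_eq_abs]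
      rw [h1]
      have h2 : 2 * d * ε < |μ i₀ - V x.1| := hc i₀
      have h3 : (0:ℝ) ≤ 2 * d * ε := by positivity
      have h4 : 0 < ‖b.repr δ i₀‖ := norm_pos_iff.mpr hi₀
      have h5 : (2 * d * ε) ^ 2 < |μ i₀ - V x.1| ^ 2 := by nlinarith
      calc (2 * d * ε) ^ 2 * ‖b.repr δ i₀‖ ^ 2
          < |μ i₀ - V x.1| ^ 2 * ‖b.repr δ i₀‖ ^ 2 :=
            mul_lt_mul_of_pos_right h5 (pow_pos h4 2)
        _ = (|μ i₀ - V x.1| * ‖b.repr δ i₀‖) ^ 2 := by ring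
    calc (2 * d * ε) ^ 2 = (2 * d * ε) ^ 2 * ∑ i, ‖b.repr δ i‖ ^ 2 := by rw [hδ1]; ring
      _ = ∑ i, (2 * d * ε) ^ 2 * ‖b.repr δ i‖ ^ 2 := Finset.mul_sum _ _ _
      _ < ∑ i, ‖b.repr w i‖ ^ 2 :=
          Finset.sum_lt_sum (fun i _ => heach i) ⟨i₀, Finset.mem_univ i₀, hstrict⟩
  have hd1 : (1 : ℝ) ≤ d := by exact_mod_cast hd
  nlinarith [sq_nonneg ε]
end Mat

open Matrix

/-- Elgart–Klein Lemma 4.4: if the potential values on a finite `Θ ⊂ ℤ^d` are `η`-separated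
and `ε < η/(4d)`, then `H_{ε,Θ}` has an eigensystem `{(ψ_x, λ_x)}_{x∈Θ}` with
`|λ_x - λ_y| ≥ η - 4dε > 0` for `x ≠ y` and `|ψ_y(x)| ≤ (2dε/(η - 2dε))^{|x-y|₁}`. -/
theorem initial_step_eigensystem (d : ℕ) (hd : 0 < d) (ε η : ℝ) (hε : 0 < ε) (hη : 0 < η)
    (V : (Fin d → ℤ) → ℝ) (Θ : Finset (Fin d → ℤ))
    (hV : ∀ x ∈ Θ, ∀ y ∈ Θ, x ≠ y → η ≤ |V x - V y|)
    (hεη : ε < η / (4 * d)) :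
    ∃ (ψ : (Fin d → ℤ) → (Fin d → ℤ) → ℂ) (lam : (Fin d → ℤ) → ℝ),
      (∀ x ∈ Θ, ∀ z, z ∉ Θ → ψ x z = 0) ∧
      (∀ x ∈ Θ, ∀ z, Hop ε V Θ (ψ x) z = (lam x : ℂ) * ψ x z) ∧
      (∀ x ∈ Θ, ∀ y ∈ Θ,
        (∑ z ∈ Θ, (starRingEnd ℂ) (ψ x z) * ψ y z) = if x = y then 1 else 0) ∧
      (0 < η - 4 * d * ε) ∧
      (∀ x ∈ Θ, ∀ y ∈ Θ, x ≠ y → η - 4 * d * ε ≤ |lam x - lam y|) ∧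
      (∀ x ∈ Θ, ∀ y ∈ Θ,
        ‖ψ y x‖ ≤ ((2 * d * ε) / (η - 2 * d * ε)) ^ (dist1 x y)) := by
  classical
  have hd1 : (1 : ℝ) ≤ d := by exact_mod_cast hd
  have h4d : 4 * (d : ℝ) * ε < η := by
    have hdpos : (0 : ℝ) < 4 * d := by positivity
    have := (lt_div_iff₀ hdpos).mp (by linarith [hεη] : ε < η / (4 * d))
    linarith [this]
  have hdε : (0 : ℝ) < d * ε := by positivity
  have hgap : 0 < η - 4 * d * ε := by linarith
  have h2d : (0 : ℝ) < η - 2 * d * ε := by linarith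
  set r : ℝ := (2 * d * ε) / (η - 2 * d * ε) with hr
  have hr0 : 0 ≤ r := by
    apply div_nonneg _ (le_of_lt h2d); positivity
  have hrpos : 0 < r := by
    apply div_pos _ h2d; linarith
  set A := Amat ε V Θ with hA_def
  have hA : A.IsHermitian := Amat_isHermitian ε V Θ
  set b := hA.eigenvectorBasis with hb
  set μ := hA.eigenvalues with hμ
  have heig : ∀ (i : {x // x ∈ Θ}) (w : {x // x ∈ Θ}),
      (A *ᵥ ⇑(b i)) w = ((μ i : ℝ) : ℂ) * (b i) w := by
    intro i w
    rw [hA.mulVec_eigenvectorBasis i]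
    simp [Complex.real_smul]
    rfl
  have hexists : ∀ i : {x // x ∈ Θ}, ∃ x : {x // x ∈ Θ}, |μ i - V x.1| ≤ 2 * d * ε := by
    intro i
    apply localization V Θ (le_of_lt hε) ⇑(b i) ?_ (μ i) (fun w => heig i w)
    intro h0
    apply b.orthonormal.ne_zero i
    ext z
    exact congrFun h0 z
  choose g hg using hexists
  have huniq : ∀ (i : {x // x ∈ Θ}) (x : {x // x ∈ Θ}),
      |μ i - V x.1| ≤ 2 * d * ε → g i = x := by
    intro i x hx
    by_contra hne
    have hVne : (g i).1 ≠ x.1 := fun h => hne (Subtype.ext h)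
    have hsep := hV (g i).1 (g i).2 x.1 x.2 hVne
    have t := abs_sub_le (V (g i).1) (μ i) (V x.1)
    rw [abs_sub_comm (V (g i).1) (μ i)] at t
    linarith [hg i, hx, t, hsep]
  have hsurj : Function.Surjective g := by
    intro x
    obtain ⟨i, hi⟩ := exists_eigenvalue_near V Θ hd (le_of_lt hε) hA x
    exact ⟨i, huniq i x hi⟩
  have hbij : Function.Bijective g := Finite.surjective_iff_bijective.mp hsurj
  set e := Equiv.ofBijective g hbij with he
  have hloc : ∀ x : {x // x ∈ Θ}, |μ (e.symm x) - V x.1| ≤ 2 * d * ε := by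
    intro x
    have h1 := hg (e.symm x)
    have h2 : g (e.symm x) = x := e.apply_symm_apply x
    rwa [h2] at h1
  refine ⟨fun x => if hx : x ∈ Θ then extΘ Θ ⇑(b (e.symm ⟨x, hx⟩)) else 0,
    fun x => if hx : x ∈ Θ then μ (e.symm ⟨x, hx⟩) else 0, ?_, ?_, ?_, hgap, ?_, ?_⟩
  · -- support
    intro x hx z hz
    simp only [dif_pos hx, extΘ, dif_neg hz]
  · -- eigen equation
    intro x hx z
    simp only [dif_pos hx]
    set i := e.symm ⟨x, hx⟩ with hi
    by_cases hz : z ∈ Θ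
    · have h1 : Hop ε V Θ (extΘ Θ ⇑(b i)) z =
          -(ε : ℂ) * (∑ y ∈ Θ.filter fun y => dist1 z y = 1, extΘ Θ ⇑(b i) y)
            + (V z : ℂ) * extΘ Θ ⇑(b i) z := by
        simp only [Hop, if_pos hz]
      rw [h1]
      have h2 := Amat_mulVec ε V Θ ⇑(b i) ⟨z, hz⟩
      have h3 := heig i ⟨z, hz⟩
      rw [h2] at h3
      rw [show extΘ Θ ⇑(b i) z = (b i) ⟨z, hz⟩ from extΘ_coe Θ ⇑(b i) ⟨z, hz⟩]
      exact h3
    · simp only [Hop, if_neg hz, extΘ, dif_neg hz, mul_zero]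
  · -- orthonormality
    intro x hx y hy
    simp only [dif_pos hx, dif_pos hy]
    set i := e.symm ⟨x, hx⟩ with hi
    set j := e.symm ⟨y, hy⟩ with hj
    have h1 : ∑ z ∈ Θ, (starRingEnd ℂ) (extΘ Θ ⇑(b i) z) * extΘ Θ ⇑(b j) z
        = ∑ z : {x // x ∈ Θ}, (starRingEnd ℂ) ((b i) z) * (b j) z := by
      rw [Finset.univ_eq_attach]
      rw [← Finset.sum_attach Θ
        (fun z => (starRingEnd ℂ) (extΘ Θ ⇑(b i) z) * extΘ Θ ⇑(b j) z)]
      refine Finset.sum_congr rfl fun z _ => ?_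
      rw [extΘ_coe, extΘ_coe]
    rw [h1]
    have h2 : (inner ℂ (b i) (b j) : ℂ)
        = ∑ z : {x // x ∈ Θ}, (starRingEnd ℂ) ((b i) z) * (b j) z := by
      simp [PiLp.inner_apply, RCLike.inner_apply]
      exact Finset.sum_congr rfl fun z _ => mul_comm _ _
    rw [← h2, orthonormal_iff_ite.mp b.orthonormal i j]
    have hij : (i = j) ↔ (x = y) := by
      constructor
      · intro h
        have := congrArg e h
        rw [hi, hj, e.apply_symm_apply, e.apply_symm_apply] at this
        exact congrArg Subtype.val this
      · intro h
        subst h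
        rfl
    by_cases hxy : x = y
    · simp [hxy, hij.mpr hxy]
    · rw [if_neg (fun h => hxy (hij.mp h)), if_neg hxy]
  · -- separation
    intro x hx y hy hxy
    simp only [dif_pos hx, dif_pos hy]
    have hsep := hV x hx y hy hxy
    set a1 := μ (e.symm ⟨x, hx⟩)
    set a2 := μ (e.symm ⟨y, hy⟩)
    have h1 : |a1 - V x| ≤ 2 * d * ε := hloc ⟨x, hx⟩
    have h2 : |a2 - V y| ≤ 2 * d * ε := hloc ⟨y, hy⟩
    have t1 := abs_sub_le (V x) a1 (V y)
    have t2 := abs_sub_le a1 a2 (V y)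
    rw [abs_sub_comm (V x) a1] at t1
    calc η - 4 * d * ε ≤ |V x - V y| - |a1 - V x| - |a2 - V y| := by linarith
      _ ≤ |a1 - a2| := by linarith
  · -- decay
    intro x hx y hy
    simp only [dif_pos hy]
    set j := e.symm ⟨y, hy⟩ with hj
    have hlocy : |μ j - V y| ≤ 2 * d * ε := hloc ⟨y, hy⟩
    have claim : ∀ k : ℕ, ∀ x' : Fin d → ℤ, k ≤ dist1 x' y →
        ‖extΘ Θ ⇑(b j) x'‖ ≤ r ^ k := by
      intro k
      induction k with
      | zero =>
        intro x' _
        rw [pow_zero]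
        by_cases hx' : x' ∈ Θ
        · rw [show extΘ Θ ⇑(b j) x' = (b j) ⟨x', hx'⟩ from extΘ_coe Θ ⇑(b j) ⟨x', hx'⟩]
          have hb1 : ∑ z : {x // x ∈ Θ}, ‖(b j) z‖ ^ 2 = 1 := by
            rw [← PiLp.norm_sq_eq_of_L2, b.orthonormal.1 j]
            norm_num
          have hle : ‖(b j) ⟨x', hx'⟩‖ ^ 2 ≤ 1 := by
            rw [← hb1]
            exact Finset.single_le_sum (f := fun z => ‖(b j) z‖ ^ 2)
              (fun z _ => sq_nonneg _) (Finset.mem_univ _)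
          nlinarith [norm_nonneg ((b j) ⟨x', hx'⟩)]
        · simp [extΘ, hx']
      | succ k ih =>
        intro x' hk
        by_cases hx' : x' ∈ Θ
        · have hxy' : x' ≠ y := by
            intro h
            subst h
            have : dist1 x' x' = 0 := by simp [dist1]
            omega
          have hVfar : η - 2 * d * ε ≤ |μ j - V x'| := by
            have hsep := hV x' hx' y hy hxy'
            have t := abs_sub_le (V x') (μ j) (V y)
            rw [abs_sub_comm (V x') (μ j)] at t
            linarith
          have hstep := step_bound V Θ (le_of_lt hε) ⇑(b j) (μ j) ⟨x', hx'⟩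
            (heig j ⟨x', hx'⟩) (r ^ k) (by positivity) ?_
          · rw [show extΘ Θ ⇑(b j) x' = (b j) ⟨x', hx'⟩ from extΘ_coe Θ ⇑(b j) ⟨x', hx'⟩]
            have h6 : (η - 2 * d * ε) * ‖(b j) ⟨x', hx'⟩‖
                ≤ 2 * d * ε * r ^ k :=
              le_trans (mul_le_mul_of_nonneg_right hVfar (norm_nonneg _)) hstep
            have hrpow : 2 * d * ε * r ^ k = (η - 2 * d * ε) * r ^ (k + 1) := by
              have hr1 : (η - 2 * d * ε) * r = 2 * d * ε := by
                rw [hr, mul_div_assoc']; exact mul_div_cancel_left₀ _ (ne_of_gt h2d)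
              rw [pow_succ]; linear_combination (-(r ^ k)) * hr1
            rw [hrpow] at h6
            exact le_of_mul_le_mul_left h6 h2d
          · intro y' hy'
            apply ih y'
            have ht := dist1_triangle x' y' y
            have h1 : dist1 x' y' = 1 := (Finset.mem_filter.mp hy').2
            omega
        · have : extΘ Θ ⇑(b j) x' = 0 := by simp [extΘ, hx']
          rw [this]
          simp only [norm_zero]
          positivity
    exact claim (dist1 x y) x (le_refl _)
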